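/- With the same notation, as γ → 0⁺ the normalized weights α_j(γ) = w_j(γ)/Σ_k w_k(γ), where w_j(γ) = φ(y; H ν_j(γ), H Q_γ H' + R/(1−γ)), converge to the particle filter weights φ(y; H x^p_j, R)/Σ_k φ(y; H x^p_k, R). -/

import Mathlib

open Matrix Filter Topology

/-- The multivariate normal density `φ(x; μ, Σ)`. -/
noncomputable def gpdf {n : ℕ} (x μ : Fin n → ℝ) (S : Matrix (Fin n) (Fin n) ℝ) : ℝ :=
  (2 * Real.pi) ^ (-(n : ℝ) / 2) * S.det ^ (-(1 : ℝ) / 2) *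
    Real.exp (-(1 / 2) * ((x - μ) ⬝ᵥ (S⁻¹ *ᵥ (x - μ))))

set_option maxHeartbeats 1000000 in
lemma gpdf_continuousAt {n : ℕ} (y μ : Fin n → ℝ) (S : Matrix (Fin n) (Fin n) ℝ)
    (hS : S.det ≠ 0) :
    ContinuousAt (fun p : (Fin n → ℝ) × Matrix (Fin n) (Fin n) ℝ => gpdf y p.1 p.2) (μ, S) := by
  unfold gpdf
  have hinv : ContinuousAt (Inv.inv : Matrix (Fin n) (Fin n) ℝ → _) S :=
    continuousAt_matrix_inv S (by rw [Ring.inverse_eq_inv']; exact continuousAt_inv₀ hS)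
  have hsub : Continuous (fun p : (Fin n → ℝ) × Matrix (Fin n) (Fin n) ℝ => y - p.1) :=
    continuous_const.sub continuous_fst
  have hinv' : ContinuousAt (fun p : (Fin n → ℝ) × Matrix (Fin n) (Fin n) ℝ => (p.2)⁻¹) (μ, S) :=
    hinv.comp continuous_snd.continuousAt
  have hmv : ContinuousAt
      (fun p : (Fin n → ℝ) × Matrix (Fin n) (Fin n) ℝ => (p.2)⁻¹ *ᵥ (y - p.1)) (μ, S) := by
    have hc : Continuous (fun pr : Matrix (Fin n) (Fin n) ℝ × (Fin n → ℝ) => pr.1 *ᵥ pr.2) :=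
      continuous_fst.matrix_mulVec continuous_snd
    exact hc.continuousAt.comp (hinv'.prodMk hsub.continuousAt)
  have hdot : ContinuousAt
      (fun p : (Fin n → ℝ) × Matrix (Fin n) (Fin n) ℝ =>
        (y - p.1) ⬝ᵥ ((p.2)⁻¹ *ᵥ (y - p.1))) (μ, S) := by
    have hc : Continuous (fun pr : (Fin n → ℝ) × (Fin n → ℝ) => pr.1 ⬝ᵥ pr.2) :=
      continuous_fst.dotProduct continuous_snd
    exact hc.continuousAt.comp (hsub.continuousAt.prodMk hmv)
  have hdet : ContinuousAt
      (fun p : (Fin n → ℝ) × Matrix (Fin n) (Fin n) ℝ => (p.2).det ^ (-(1:ℝ)/2)) (μ, S) :=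
    (continuous_snd.matrix_det.continuousAt).rpow_const (Or.inl hS)
  exact (continuousAt_const.mul hdet).mul
    (Real.continuous_exp.continuousAt.comp (continuousAt_const.mul hdot))

lemma gpdf_pos {n : ℕ} (y μ : Fin n → ℝ) (S : Matrix (Fin n) (Fin n) ℝ)
    (hS : 0 < S.det) : 0 < gpdf y μ S := by
  unfold gpdf
  have h1 : (0:ℝ) < 2 * Real.pi := by positivity
  exact mul_pos (mul_pos (Real.rpow_pos_of_pos h1 _) (Real.rpow_pos_of_pos hS _))
    (Real.exp_pos _)

/-- As `γ → 0⁺`, the normalized EnKPF weights converge to the particle filter weights. -/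
theorem enkpf_weights_gamma_to_zero {q r N : ℕ} (hN : 0 < N)
    (Phat : Matrix (Fin q) (Fin q) ℝ) (H : Matrix (Fin r) (Fin q) ℝ)
    (R : Matrix (Fin r) (Fin r) ℝ)
    (hP : Phat.PosSemidef) (hR : R.PosDef)
    (xp : Fin N → Fin q → ℝ) (y : Fin r → ℝ)
    (K : ℝ → Matrix (Fin q) (Fin r) ℝ)
    (hK : ∀ γ, K γ = γ • (Phat * Hᵀ * (γ • (H * Phat * Hᵀ) + R)⁻¹))
    (ν : ℝ → Fin N → Fin q → ℝ)
    (hν : ∀ γ j, ν γ j = xp j + K γ *ᵥ (y - H *ᵥ xp j))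
    (Q : ℝ → Matrix (Fin q) (Fin q) ℝ)
    (hQ : ∀ γ, Q γ = γ⁻¹ • (K γ * R * (K γ)ᵀ))
    (w : ℝ → Fin N → ℝ)
    (hw : ∀ γ j, w γ j = gpdf y (H *ᵥ ν γ j) (H * Q γ * Hᵀ + (1 - γ)⁻¹ • R))
    (α : ℝ → Fin N → ℝ)
    (hα : ∀ γ j, α γ j = w γ j / ∑ k, w γ k) :
    ∀ j, Tendsto (fun γ => α γ j) (nhdsWithin 0 (Set.Ioo 0 1))
      (nhds (gpdf y (H *ᵥ xp j) R / ∑ k, gpdf y (H *ᵥ xp k) R)) := by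
  set l := nhdsWithin (0:ℝ) (Set.Ioo 0 1) with hl
  have hRdet : (0:ℝ) < R.det := hR.det_pos
  -- γ tends to 0
  have hγ : Tendsto (fun γ : ℝ => γ) l (nhds 0) :=
    tendsto_id.mono_left nhdsWithin_le_nhds
  set B : ℝ → Matrix (Fin q) (Fin r) ℝ :=
    fun γ => Phat * Hᵀ * (γ • (H * Phat * Hᵀ) + R)⁻¹ with hB
  -- the inverse part tends to R⁻¹
  have hf : Tendsto (fun γ : ℝ => γ • (H * Phat * Hᵀ) + R) l (nhds R) := by
    have := (hγ.smul (tendsto_const_nhds (x := H * Phat * Hᵀ))).add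
      (tendsto_const_nhds (x := R))
    simpa using this
  have hinvR : ContinuousAt (Inv.inv : Matrix (Fin r) (Fin r) ℝ → _) R :=
    continuousAt_matrix_inv R (by rw [Ring.inverse_eq_inv']; exact continuousAt_inv₀ hRdet.ne')
  have hBt : Tendsto B l (nhds (Phat * Hᵀ * R⁻¹)) := by
    have hc : Continuous (fun M : Matrix (Fin r) (Fin r) ℝ => Phat * Hᵀ * M) :=
      continuous_const.matrix_mul continuous_id
    have := (hc.tendsto R⁻¹).comp (hinvR.tendsto.comp hf)
    exact this.congr fun γ => rfl
  -- K tends to 0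
  have hKt : Tendsto K l (nhds 0) := by
    have := hγ.smul hBt
    rw [zero_smul] at this
    refine this.congr fun γ => ?_
    rw [hK]
  -- ν tends to xp
  have hνt : ∀ j, Tendsto (fun γ => H *ᵥ ν γ j) l (nhds (H *ᵥ xp j)) := by
    intro j
    have hc : Continuous (fun M : Matrix (Fin q) (Fin r) ℝ =>
        H *ᵥ (xp j + M *ᵥ (y - H *ᵥ xp j))) :=
      (continuous_const.matrix_mulVec
        (continuous_const.add (continuous_id.matrix_mulVec continuous_const)))
    have h0 := (hc.tendsto 0).comp hKt
    have key : Tendsto (fun γ => H *ᵥ (xp j + K γ *ᵥ (y - H *ᵥ xp j))) l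
        (nhds (H *ᵥ xp j)) := by simpa [Function.comp_def] using h0
    exact key.congr fun γ => by rw [hν]
  -- Q tends to 0
  have hQt : Tendsto Q l (nhds 0) := by
    have h1 : Tendsto (fun γ => γ • (B γ * R * (B γ)ᵀ)) l (nhds 0) := by
      have hc : Continuous (fun M : Matrix (Fin q) (Fin r) ℝ => M * R * Mᵀ) :=
        (continuous_id.matrix_mul continuous_const).matrix_mul continuous_id.matrix_transpose
      have := hγ.smul ((hc.tendsto _).comp hBt)
      simpa using this
    refine h1.congr' ?_
    filter_upwards [self_mem_nhdsWithin] with γ hγ'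
    have hγ0 : γ ≠ 0 := ne_of_gt hγ'.1
    rw [hQ, hK]
    show γ • (B γ * R * (B γ)ᵀ) = γ⁻¹ • ((γ • B γ) * R * (γ • B γ)ᵀ)
    rw [Matrix.transpose_smul, Matrix.smul_mul, Matrix.smul_mul, Matrix.mul_smul,
      smul_smul, smul_smul, inv_mul_cancel₀ hγ0, one_mul]
  -- the covariance tends to R
  have hSt : Tendsto (fun γ => H * Q γ * Hᵀ + (1 - γ)⁻¹ • R) l (nhds R) := by
    have hc : Continuous (fun M : Matrix (Fin q) (Fin q) ℝ => H * M * Hᵀ) :=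
      (continuous_const.matrix_mul continuous_id).matrix_mul continuous_const
    have h1 : Tendsto (fun γ => H * Q γ * Hᵀ) l (nhds 0) := by
      have := (hc.tendsto 0).comp hQt
      simpa [Function.comp_def] using this
    have h2 : Tendsto (fun γ : ℝ => (1 - γ)⁻¹ • R) l (nhds R) := by
      have hi : Tendsto (fun γ : ℝ => (1 - γ)⁻¹) l (nhds 1) := by
        have := ((tendsto_const_nhds (x := (1:ℝ))).sub hγ).inv₀ (by norm_num)
        simpa using this
      have := hi.smul (tendsto_const_nhds (x := R))
      simpa using this
    have := h1.add h2
    simpa using this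
  -- w tends to particle filter weights
  have hwt : ∀ j, Tendsto (fun γ => w γ j) l (nhds (gpdf y (H *ᵥ xp j) R)) := by
    intro j
    have hpair : Tendsto (fun γ => (H *ᵥ ν γ j, H * Q γ * Hᵀ + (1 - γ)⁻¹ • R)) l
        (nhds (H *ᵥ xp j, R)) := (hνt j).prodMk_nhds hSt
    have := (gpdf_continuousAt y (H *ᵥ xp j) R hRdet.ne').tendsto.comp hpair
    refine this.congr fun γ => ?_
    rw [hw]
    rfl
  -- positivity of the limit denominator
  have hpos : (0:ℝ) < ∑ k, gpdf y (H *ᵥ xp k) R := by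
    have : (Finset.univ : Finset (Fin N)).Nonempty := by
      simpa [Finset.univ_nonempty_iff] using Fin.pos_iff_nonempty.mp hN
    exact Finset.sum_pos (fun k _ => gpdf_pos _ _ _ hRdet) this
  have hsum : Tendsto (fun γ => ∑ k, w γ k) l (nhds (∑ k, gpdf y (H *ᵥ xp k) R)) :=
    tendsto_finset_sum _ fun k _ => hwt k
  intro j
  have := (hwt j).div hsum hpos.ne'
  refine this.congr fun γ => ?_
  rw [hα]
  rfl
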